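/- Let p be an odd prime and v ∈ ℤ/p a non-square. The set Ĝ_p of 3×3 matrices L over ℤ/p with det L = 1 and Lᵀ A L = A, where A = diag(1, -v, 0), forms a group of order 2p²(p+1). -/

import Mathlib

open Matrix

/-- The group `Ĝ_p` of solutions mod `p` of the defining equations of `SO(3)_p`. -/
abbrev Ghat (p : ℕ) (v : ZMod p) : Type :=
  {L : Matrix (Fin 3) (Fin 3) (ZMod p) //
    Lᵀ * Matrix.diagonal ![1, -v, 0] * L = Matrix.diagonal ![1, -v, 0] ∧ L.det = 1}

section aux

variable {p : ℕ} [Fact p.Prime] {v : ZMod p}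

private lemma Ghat.v_ne_zero (hv : ¬ IsSquare v) : v ≠ 0 := fun h => hv ⟨0, by simp [h]⟩

private lemma Ghat.two_ne (hp : Odd p) : (2 : ZMod p) ≠ 0 := by
  intro h
  have h2 : ((2:ℕ) : ZMod p) = 0 := by exact_mod_cast h
  have := (ZMod.natCast_eq_zero_iff 2 p).mp h2
  have := (Nat.prime_dvd_prime_iff_eq (Fact.out) Nat.prime_two).mp this
  exact (Nat.odd_iff.mp hp).symm.trans_ne (by omega) rfl

private lemma Ghat.neg_one_ne_one' (hp : Odd p) : (-1 : ZMod p) ≠ 1 := by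
  intro h
  exact Ghat.two_ne hp (by linear_combination -h)

private lemma Ghat.den_ne (hv : ¬ IsSquare v) (t : ZMod p) : 1 - v * t ^ 2 ≠ 0 := by
  intro h
  have ht : t ≠ 0 := by rintro rfl; simp at h
  exact hv ⟨1/t, by field_simp; linear_combination -h⟩

private lemma Ghat.entry_eq (L : Matrix (Fin 3) (Fin 3) (ZMod p))
    (H : Lᵀ * Matrix.diagonal ![1, -v, 0] * L = Matrix.diagonal ![1, -v, 0]) (i j : Fin 3) :
    L 0 i * L 0 j - v * (L 1 i * L 1 j) = Matrix.diagonal ![1, -v, 0] i j := by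
  have h := congrFun (congrFun H i) j
  simp only [Matrix.mul_apply, Fin.sum_univ_three, Matrix.transpose_apply,
    Matrix.diagonal_apply] at h ⊢
  fin_cases i <;> fin_cases j <;> simp_all <;> ring_nf <;> ring_nf at h <;> linear_combination h

private lemma Ghat.aniso (hv : ¬ IsSquare v) {x y : ZMod p} (h : x^2 - v*y^2 = 0) :
    x = 0 ∧ y = 0 := by
  by_cases hy : y = 0
  · subst hy
    refine ⟨?_, rfl⟩
    have : x^2 = 0 := by linear_combination h
    exact pow_eq_zero_iff (n := 2) (by norm_num) |>.mp this
  · exact absurd ⟨x/y, by field_simp; linear_combination -h⟩ hv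

private lemma Ghat.shape (hv : ¬ IsSquare v) (L : Matrix (Fin 3) (Fin 3) (ZMod p))
    (H : Lᵀ * Matrix.diagonal ![1, -v, 0] * L = Matrix.diagonal ![1, -v, 0])
    (Hd : L.det = 1) :
    L 0 2 = 0 ∧ L 1 2 = 0 ∧ (L 2 2)^2 = 1 ∧ L 0 1 = L 2 2 * v * L 1 0 ∧
      L 1 1 = L 2 2 * L 0 0 ∧ (L 0 0)^2 - v * (L 1 0)^2 = 1 := by
  have E00 : L 0 0 * L 0 0 - v * (L 1 0 * L 1 0) = 1 := by simpa using Ghat.entry_eq L H 0 0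
  have E01 : L 0 0 * L 0 1 - v * (L 1 0 * L 1 1) = 0 := by simpa using Ghat.entry_eq L H 0 1
  have E11 : L 0 1 * L 0 1 - v * (L 1 1 * L 1 1) = -v := by simpa using Ghat.entry_eq L H 1 1
  have E22 : (L 0 2)^2 - v * (L 1 2)^2 = 0 := by
    have := Ghat.entry_eq L H 2 2; simp at this; linear_combination this
  obtain ⟨h02, h12⟩ := Ghat.aniso hv E22
  set a := L 0 0; set b := L 0 1; set c := L 1 0; set d := L 1 1
  set s := a * d - b * c with hs_def
  have hdet : L 2 2 * s = 1 := by
    rw [Matrix.det_fin_three] at Hd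
    rw [h02, h12] at Hd
    linear_combination Hd
  have hd11 : d = s * a := by linear_combination (-d) * E00 + c * E01
  have hb01 : b = s * v * c := by linear_combination (-b) * E00 + a * E01
  have hs2 : s ^ 2 = 1 := by
    have h1 : v * (s^2) = v * 1 := by
      linear_combination (-1) * E11 + (b + s*v*c) * hb01 - v*(d + s*a) * hd11 - v*s^2 * E00
    exact mul_left_cancel₀ (Ghat.v_ne_zero hv) h1
  have hL22 : L 2 2 = s := by linear_combination s * hdet - L 2 2 * hs2
  refine ⟨h02, h12, by rw [hL22]; exact hs2, by rw [hL22]; linear_combination hb01,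
    by rw [hL22]; exact hd11, by linear_combination E00⟩

/-- The standard matrix form of an element of `Ghat`. -/
private def Ghat.mkL (v a c s e f : ZMod p) : Matrix (Fin 3) (Fin 3) (ZMod p) :=
  !![a, s*v*c, 0; c, s*a, 0; e, f, s]

private lemma Ghat.mkL_mem {a c s e f : ZMod p} (ha : a^2 - v*c^2 = 1) (hs : s^2 = 1) :
    (Ghat.mkL v a c s e f)ᵀ * Matrix.diagonal ![1, -v, 0] * (Ghat.mkL v a c s e f)
      = Matrix.diagonal ![1, -v, 0] ∧ (Ghat.mkL v a c s e f).det = 1 := by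
  constructor
  · ext i j
    fin_cases i <;> fin_cases j <;>
      simp [Ghat.mkL, Matrix.mul_apply, Fin.sum_univ_three, Matrix.diagonal_apply,
        Matrix.transpose_apply, Matrix.vecHead, Matrix.vecTail] <;>
      first
        | ring1
        | linear_combination ha
        | linear_combination (v^2*c^2 - v*a^2) * hs - v * ha
  · rw [Matrix.det_fin_three]
    simp [Ghat.mkL]
    linear_combination s^2 * ha + hs

/-- Stereographic projection: the conic `a² - v c² = 1` has `p + 1` points. -/
private noncomputable def Ghat.conicEquiv (hp : Odd p) (hv : ¬ IsSquare v) :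
    {x : ZMod p × ZMod p // x.1 ^ 2 - v * x.2 ^ 2 = 1} ≃ Option (ZMod p) where
  toFun x := if h : x.1.1 = 1 then none else some (x.1.2 / (x.1.1 - 1))
  invFun o := o.elim ⟨(1, 0), by ring⟩ (fun t =>
    ⟨((-1 - v * t ^ 2) / (1 - v * t ^ 2), -2 * t / (1 - v * t ^ 2)), by
      have := Ghat.den_ne hv t
      field_simp
      ring⟩)
  left_inv := by
    rintro ⟨⟨a, c⟩, hx⟩
    simp only at hx
    by_cases h : a = 1
    · subst h
      have hc : c = 0 := by
        have h0 : v * c ^ 2 = 0 := by linear_combination -hx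
        have := (mul_eq_zero.mp h0).resolve_left (Ghat.v_ne_zero hv)
        exact pow_eq_zero_iff (two_ne_zero) |>.mp this
      subst hc
      simp
    · have hu : a - 1 ≠ 0 := sub_ne_zero.mpr h
      have h2 : (2 : ZMod p) ≠ 0 := Ghat.two_ne hp
      have hD : (-2 : ZMod p) / (a - 1) ≠ 0 := div_ne_zero (neg_ne_zero.mpr h2) hu
      have keyB : 1 - v * (c / (a - 1)) ^ 2 = -2 / (a - 1) := by
        field_simp
        linear_combination hx
      have keyA : -1 - v * (c / (a - 1)) ^ 2 = -2 * a / (a - 1) := by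
        field_simp
        linear_combination hx
      simp only [dif_neg h, Option.elim]
      refine Subtype.ext (Prod.ext ?_ ?_) <;> simp only
      · rw [keyA, keyB, div_eq_iff hD]
        field_simp
      · rw [keyB, div_eq_iff hD]
        field_simp
  right_inv := by
    rintro (_ | t)
    · simp
    · have hden := Ghat.den_ne hv t
      have ha : (-1 - v * t ^ 2) / (1 - v * t ^ 2) ≠ 1 := by
        intro h
        rw [div_eq_one_iff_eq hden] at h
        exact Ghat.neg_one_ne_one' hp (by linear_combination h)
      simp only [Option.elim, dif_neg ha, Option.some_inj]
      have h2 : (2 : ZMod p) ≠ 0 := Ghat.two_ne hp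
      rw [div_sub_one hden,
        show -1 - v * t ^ 2 - (1 - v * t ^ 2) = -2 by ring]
      refine (dif_neg ha).trans ?_
      have h2' : (-2 : ZMod p) ≠ 0 := neg_ne_zero.mpr h2
      congr 1
      field_simp
      exact mul_div_cancel_right₀ t (by rw [mul_comm]; exact hden)

/-- There are exactly two square roots of unity. -/
private noncomputable def Ghat.signEquiv (hp : Odd p) : {s : ZMod p // s ^ 2 = 1} ≃ Bool where
  toFun s := decide (s.1 = 1)
  invFun b := if b then ⟨1, one_pow 2⟩ else ⟨-1, by ring⟩
  left_inv := by
    rintro ⟨s, hs⟩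
    rcases mul_self_eq_one_iff.mp (by linear_combination hs) with h | h <;> subst h
    · simp
    · simp [Ghat.neg_one_ne_one' hp]
  right_inv := by
    rintro (_ | _) <;> simp [Ghat.neg_one_ne_one' hp]

/-- The parametrization of `Ghat`. -/
private noncomputable def Ghat.paramEquiv (hp : Odd p) (hv : ¬ IsSquare v) :
    Ghat p v ≃
      {x : ZMod p × ZMod p // x.1 ^ 2 - v * x.2 ^ 2 = 1} × {s : ZMod p // s ^ 2 = 1} ×
        (ZMod p × ZMod p) where
  toFun L :=
    (⟨(L.1 0 0, L.1 1 0), (Ghat.shape hv L.1 L.2.1 L.2.2).2.2.2.2.2⟩,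
     ⟨L.1 2 2, (Ghat.shape hv L.1 L.2.1 L.2.2).2.2.1⟩,
     (L.1 2 0, L.1 2 1))
  invFun x := ⟨Ghat.mkL v x.1.1.1 x.1.1.2 x.2.1.1 x.2.2.1 x.2.2.2,
    Ghat.mkL_mem x.1.2 x.2.1.2⟩
  left_inv := by
    rintro ⟨L, hL⟩
    obtain ⟨h02, h12, hs2, h01, h11, hE⟩ := Ghat.shape hv L hL.1 hL.2
    refine Subtype.ext ?_
    ext i j
    fin_cases i <;> fin_cases j <;>
      simp [Ghat.mkL, h02, h12, h01, h11]
  right_inv := by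
    rintro ⟨⟨⟨a, c⟩, hx⟩, ⟨s, hs⟩, e, f⟩
    refine Prod.ext (Subtype.ext ?_) (Prod.ext (Subtype.ext ?_) ?_) <;>
      simp [Ghat.mkL]

end aux

theorem Ghat_group_card (p : ℕ) [Fact p.Prime] (hp : Odd p)
    (v : ZMod p) (hv : ¬ IsSquare v) :
    ∃ _ : Group (Ghat p v),
      (∀ x y : Ghat p v, (x * y).val = x.val * y.val) ∧
      Nat.card (Ghat p v) = 2 * p ^ 2 * (p + 1) := by
  have hA : ∀ L : Ghat p v, IsUnit L.1.det := fun L => by rw [L.2.2]; exact isUnit_one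
  refine ⟨{
    mul := fun x y => ⟨x.1 * y.1, by
      constructor
      · calc (x.1 * y.1)ᵀ * Matrix.diagonal ![1, -v, 0] * (x.1 * y.1)
            = y.1ᵀ * (x.1ᵀ * Matrix.diagonal ![1, -v, 0] * x.1) * y.1 := by
              rw [Matrix.transpose_mul]; simp only [Matrix.mul_assoc]
          _ = _ := by rw [x.2.1]; exact y.2.1
      · rw [Matrix.det_mul, x.2.2, y.2.2, mul_one]⟩
    one := ⟨1, by simp, by simp⟩
    inv := fun x => ⟨x.1⁻¹, by
      constructor
      · have h1 : x.1⁻¹ᵀ = x.1ᵀ⁻¹ := (Matrix.transpose_nonsing_inv x.1).symm ▸ rfl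
        rw [Matrix.transpose_nonsing_inv]
        calc x.1ᵀ⁻¹ * Matrix.diagonal ![1, -v, 0] * x.1⁻¹
            = x.1ᵀ⁻¹ * (x.1ᵀ * Matrix.diagonal ![1, -v, 0] * x.1) * x.1⁻¹ := by rw [x.2.1]
          _ = (x.1ᵀ⁻¹ * x.1ᵀ) * Matrix.diagonal ![1, -v, 0] * (x.1 * x.1⁻¹) := by simp only [Matrix.mul_assoc]
          _ = Matrix.diagonal ![1, -v, 0] := by
              rw [Matrix.nonsing_inv_mul _ (by rw [Matrix.det_transpose]; exact hA x),
                Matrix.mul_nonsing_inv _ (hA x), Matrix.one_mul, Matrix.mul_one]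
      · rw [Matrix.det_nonsing_inv, x.2.2]; simp⟩
    mul_assoc := fun x y z => Subtype.ext (mul_assoc x.1 y.1 z.1)
    one_mul := fun x => Subtype.ext (one_mul x.1)
    mul_one := fun x => Subtype.ext (mul_one x.1)
    inv_mul_cancel := fun x => Subtype.ext (Matrix.nonsing_inv_mul x.1 (hA x)) }, fun x y => rfl, ?_⟩
  have h1 : Nat.card (Ghat p v) =
      Nat.card ({x : ZMod p × ZMod p // x.1 ^ 2 - v * x.2 ^ 2 = 1} × {s : ZMod p // s ^ 2 = 1} ×
        (ZMod p × ZMod p)) := Nat.card_congr (Ghat.paramEquiv hp hv)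
  have hC : Nat.card {x : ZMod p × ZMod p // x.1 ^ 2 - v * x.2 ^ 2 = 1} = p + 1 := by
    rw [Nat.card_congr (Ghat.conicEquiv hp hv), Finite.card_option, Nat.card_zmod]
  have hS : Nat.card {s : ZMod p // s ^ 2 = 1} = 2 := by
    rw [Nat.card_congr (Ghat.signEquiv hp), Nat.card_eq_fintype_card, Fintype.card_bool]
  rw [h1, Nat.card_prod, Nat.card_prod, Nat.card_prod, hC, hS, Nat.card_zmod]
  ring
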